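/- arXiv:2103.04730 — 5 statements merged into one kernel-verified Lean document; each statement's English description precedes it below -/
import Mathlib

section
/- Under the natural constraints, if 0 < β ≤ 1, 0 ≤ b ≤ 1, and T ≥ 2, then at the subsidy m₁(b) the active value function strictly exceeds the passive value function: Va m₁(b) T b > Vp m₁(b) T b. -/
noncomputable def V (β m p01p p11p p01a p11a : ℝ) : ℕ → ℝ → ℝ
  | 0, b => b
  | T + 1, b =>
      max (b + m + β * V β m p01p p11p p01a p11a T (b * p11p + (1 - b) * p01p))
          (b + β * (b * V β m p01p p11p p01a p11a T p11a
                    + (1 - b) * V β m p01p p11p p01a p11a T p01a))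

noncomputable def Vp (β m p01p p11p p01a p11a : ℝ) (T : ℕ) (b : ℝ) : ℝ :=
  b + m + β * V β m p01p p11p p01a p11a (T - 1) (b * p11p + (1 - b) * p01p)

noncomputable def Va (β m p01p p11p p01a p11a : ℝ) (T : ℕ) (b : ℝ) : ℝ :=
  b + β * (b * V β m p01p p11p p01a p11a (T - 1) p11a
           + (1 - b) * V β m p01p p11p p01a p11a (T - 1) p01a)

lemma V_slope1 (β m p01p p11p p01a p11a : ℝ) (hβ : 0 ≤ β)
    (hp : p01p ≤ p11p) (ha : p01a ≤ p11a) :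
    ∀ T : ℕ, ∀ x y : ℝ, x ≤ y →
      V β m p01p p11p p01a p11a T x + (y - x) ≤ V β m p01p p11p p01a p11a T y := by
  intro T
  induction T with
  | zero => intro x y h; simp [V]
  | succ T ih =>
    intro x y hxy
    simp only [V]
    have hpp : x * p11p + (1 - x) * p01p ≤ y * p11p + (1 - y) * p01p := by nlinarith
    have h1 := ih (x * p11p + (1 - x) * p01p) (y * p11p + (1 - y) * p01p) hpp
    have h2 := ih p01a p11a ha
    have hA : (x + m + β * V β m p01p p11p p01a p11a T (x * p11p + (1 - x) * p01p))
        + (y - x)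
        ≤ y + m + β * V β m p01p p11p p01a p11a T (y * p11p + (1 - y) * p01p) := by
      nlinarith [mul_le_mul_of_nonneg_left h1 hβ, mul_nonneg hβ (sub_nonneg.2 hpp)]
    have hB : (x + β * (x * V β m p01p p11p p01a p11a T p11a
          + (1 - x) * V β m p01p p11p p01a p11a T p01a)) + (y - x)
        ≤ y + β * (y * V β m p01p p11p p01a p11a T p11a
          + (1 - y) * V β m p01p p11p p01a p11a T p01a) := by
      nlinarith [mul_nonneg (mul_nonneg hβ (sub_nonneg.2 hxy))
        (show (0:ℝ) ≤ V β m p01p p11p p01a p11a T p11a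
          - V β m p01p p11p p01a p11a T p01a by linarith)]
    rw [← max_add_add_right]
    exact max_le_max hA hB

lemma V_convex (β m p01p p11p p01a p11a : ℝ) (hβ : 0 ≤ β) :
    ∀ T : ℕ, ∀ t b1 b2 : ℝ, 0 ≤ t → t ≤ 1 →
      V β m p01p p11p p01a p11a T (t * b1 + (1 - t) * b2)
        ≤ t * V β m p01p p11p p01a p11a T b1
          + (1 - t) * V β m p01p p11p p01a p11a T b2 := by
  intro T
  induction T with
  | zero => intro t b1 b2 _ _; simp [V]
  | succ T ih =>
    intro t b1 b2 ht0 ht1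
    simp only [V]
    have ht1' : (0:ℝ) ≤ 1 - t := by linarith
    have harg : (t * b1 + (1 - t) * b2) * p11p + (1 - (t * b1 + (1 - t) * b2)) * p01p
        = t * (b1 * p11p + (1 - b1) * p01p) + (1 - t) * (b2 * p11p + (1 - b2) * p01p) := by
      ring
    have hF : (t * b1 + (1 - t) * b2) + m
          + β * V β m p01p p11p p01a p11a T
              ((t * b1 + (1 - t) * b2) * p11p + (1 - (t * b1 + (1 - t) * b2)) * p01p)
        ≤ t * (b1 + m + β * V β m p01p p11p p01a p11a T (b1 * p11p + (1 - b1) * p01p))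
          + (1 - t) * (b2 + m + β * V β m p01p p11p p01a p11a T (b2 * p11p + (1 - b2) * p01p)) := by
      rw [harg]
      nlinarith [mul_le_mul_of_nonneg_left
        (ih t (b1 * p11p + (1 - b1) * p01p) (b2 * p11p + (1 - b2) * p01p) ht0 ht1) hβ]
    have hG : (t * b1 + (1 - t) * b2)
          + β * ((t * b1 + (1 - t) * b2) * V β m p01p p11p p01a p11a T p11a
              + (1 - (t * b1 + (1 - t) * b2)) * V β m p01p p11p p01a p11a T p01a)
        = t * (b1 + β * (b1 * V β m p01p p11p p01a p11a T p11a
              + (1 - b1) * V β m p01p p11p p01a p11a T p01a))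
          + (1 - t) * (b2 + β * (b2 * V β m p01p p11p p01a p11a T p11a
              + (1 - b2) * V β m p01p p11p p01a p11a T p01a)) := by
      ring
    apply max_le
    · refine hF.trans ?_
      have := mul_le_mul_of_nonneg_left (le_max_left
        (b1 + m + β * V β m p01p p11p p01a p11a T (b1 * p11p + (1 - b1) * p01p))
        (b1 + β * (b1 * V β m p01p p11p p01a p11a T p11a
              + (1 - b1) * V β m p01p p11p p01a p11a T p01a))) ht0
      have := mul_le_mul_of_nonneg_left (le_max_left
        (b2 + m + β * V β m p01p p11p p01a p11a T (b2 * p11p + (1 - b2) * p01p))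
        (b2 + β * (b2 * V β m p01p p11p p01a p11a T p11a
              + (1 - b2) * V β m p01p p11p p01a p11a T p01a))) ht1'
      linarith
    · rw [hG]
      have := mul_le_mul_of_nonneg_left (le_max_right
        (b1 + m + β * V β m p01p p11p p01a p11a T (b1 * p11p + (1 - b1) * p01p))
        (b1 + β * (b1 * V β m p01p p11p p01a p11a T p11a
              + (1 - b1) * V β m p01p p11p p01a p11a T p01a))) ht0
      have := mul_le_mul_of_nonneg_left (le_max_right
        (b2 + m + β * V β m p01p p11p p01a p11a T (b2 * p11p + (1 - b2) * p01p))
        (b2 + β * (b2 * V β m p01p p11p p01a p11a T p11a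
              + (1 - b2) * V β m p01p p11p p01a p11a T p01a))) ht1'
      linarith

lemma V_slope2 (β m p01p p11p p01a p11a : ℝ) (hβ : 0 ≤ β)
    (hp : p01p ≤ p11p) (ha : p01a ≤ p11a) (S : ℕ) (x y : ℝ) (hxy : x ≤ y) :
    V β m p01p p11p p01a p11a (S + 1) x
      + (1 + β * min (p11p - p01p) (p11a - p01a)) * (y - x)
      ≤ V β m p01p p11p p01a p11a (S + 1) y := by
  simp only [V]
  have hpp : x * p11p + (1 - x) * p01p ≤ y * p11p + (1 - y) * p01p := by nlinarith
  have h1 := V_slope1 β m p01p p11p p01a p11a hβ hp ha S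
    (x * p11p + (1 - x) * p01p) (y * p11p + (1 - y) * p01p) hpp
  have h2 := V_slope1 β m p01p p11p p01a p11a hβ hp ha S p01a p11a ha
  have hm1 : min (p11p - p01p) (p11a - p01a) ≤ p11p - p01p := min_le_left _ _
  have hm2 : min (p11p - p01p) (p11a - p01a) ≤ p11a - p01a := min_le_right _ _
  have hA : (x + m + β * V β m p01p p11p p01a p11a S (x * p11p + (1 - x) * p01p))
      + (1 + β * min (p11p - p01p) (p11a - p01a)) * (y - x)
      ≤ y + m + β * V β m p01p p11p p01a p11a S (y * p11p + (1 - y) * p01p) := by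
    nlinarith [mul_le_mul_of_nonneg_left h1 hβ,
      mul_nonneg (mul_nonneg hβ (sub_nonneg.2 hxy)) (sub_nonneg.2 hm1)]
  have hB : (x + β * (x * V β m p01p p11p p01a p11a S p11a
        + (1 - x) * V β m p01p p11p p01a p11a S p01a))
      + (1 + β * min (p11p - p01p) (p11a - p01a)) * (y - x)
      ≤ y + β * (y * V β m p01p p11p p01a p11a S p11a
        + (1 - y) * V β m p01p p11p p01a p11a S p01a) := by
    nlinarith [mul_nonneg (mul_nonneg hβ (sub_nonneg.2 hxy))
      (show (0:ℝ) ≤ V β m p01p p11p p01a p11a S p11a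
        - V β m p01p p11p p01a p11a S p01a - min (p11p - p01p) (p11a - p01a) by linarith)]
  rw [← max_add_add_right]
  exact max_le_max hA hB

theorem active_exceeds_passive_at_myopic_index
    (p01p p11p p01a p11a β b : ℝ) (T : ℕ)
    (h1 : 0 ≤ p01p) (h2 : p01p < p11p) (h3 : p11p ≤ 1)
    (h4 : 0 ≤ p01a) (h5 : p01a < p11a) (h6 : p11a ≤ 1)
    (h7 : p01a > p01p) (h8 : p11a > p11p)
    (hβ0 : 0 < β) (hβ1 : β ≤ 1) (hb0 : 0 ≤ b) (hb1 : b ≤ 1) (hT : 2 ≤ T) :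
    Va β (β * ((b * p11a + (1 - b) * p01a) - (b * p11p + (1 - b) * p01p)))
        p01p p11p p01a p11a T b
      > Vp β (β * ((b * p11a + (1 - b) * p01a) - (b * p11p + (1 - b) * p01p)))
        p01p p11p p01a p11a T b := by
  obtain ⟨S, hS⟩ : ∃ S, T - 1 = S + 1 := ⟨T - 2, by omega⟩
  unfold Va Vp
  rw [hS]
  set M := β * ((b * p11a + (1 - b) * p01a) - (b * p11p + (1 - b) * p01p)) with hM
  have hδ : 0 < min (p11p - p01p) (p11a - p01a) :=
    lt_min (by linarith) (by linarith)
  have hgap : b * p11p + (1 - b) * p01p < b * p11a + (1 - b) * p01a := by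
    rcases lt_or_eq_of_le hb0 with hb | hb
    · nlinarith [mul_pos hb (sub_pos.2 h8), mul_nonneg (by linarith : (0:ℝ) ≤ 1 - b)
        (sub_pos.2 h7).le]
    · rw [← hb]; nlinarith
  have hconv := V_convex β M p01p p11p p01a p11a hβ0.le (S + 1) b p11a p01a hb0 hb1
  have hslope := V_slope2 β M p01p p11p p01a p11a hβ0.le h2.le h5.le S
    (b * p11p + (1 - b) * p01p) (b * p11a + (1 - b) * p01a) hgap.le
  have key := hslope.trans hconv
  have hpos : 0 < β * β * min (p11p - p01p) (p11a - p01a)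
      * ((b * p11a + (1 - b) * p01a) - (b * p11p + (1 - b) * p01p)) :=
    mul_pos (mul_pos (mul_pos hβ0 hβ0) hδ) (sub_pos.2 hgap)
  rw [hM]
  nlinarith [mul_le_mul_of_nonneg_left key hβ0.le, hpos]
end

section
/- Under the natural constraints, if β > 0, 0 ≤ b ≤ 1, and T ≥ 1, then at zero passive subsidy the active value function strictly exceeds the passive value function: Va 0 T b > Vp 0 T b. In particular, the minimum subsidy required to make the passive action as valuable as the active action at any belief b ∈ [0,1] is strictly greater than 0. -/
/-- Active-only value function (independent of m). -/
noncomputable def Aact (β p01a p11a : ℝ) : ℕ → ℝ → ℝ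
  | 0, b => b
  | T + 1, b => b + β * (b * Aact β p01a p11a T p11a + (1 - b) * Aact β p01a p11a T p01a)

lemma Aact_mono (β p01a p11a : ℝ) (hβ : 0 < β) (h5 : p01a < p11a) :
    ∀ (T : ℕ) (x y : ℝ), x ≤ y → Aact β p01a p11a T x + (y - x) ≤ Aact β p01a p11a T y := by
  intro T
  induction T with
  | zero => intro x y h; simp only [Aact]; linarith
  | succ T ih =>
    intro x y h
    have hd := ih p01a p11a h5.le
    simp only [Aact]
    nlinarith [mul_nonneg (mul_nonneg hβ.le
      (by linarith : (0:ℝ) ≤ Aact β p01a p11a T p11a - Aact β p01a p11a T p01a))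
      (sub_nonneg.mpr h)]

lemma Aact_affine (β p01a p11a : ℝ) :
    ∀ (T : ℕ) (t x y : ℝ),
      Aact β p01a p11a T (t * x + (1 - t) * y)
        = t * Aact β p01a p11a T x + (1 - t) * Aact β p01a p11a T y := by
  intro T
  cases T with
  | zero => intro t x y; simp [Aact]
  | succ T => intro t x y; simp only [Aact]; ring

lemma arg_lt (p01p p11p p01a p11a b : ℝ)
    (h7 : p01a > p01p) (h8 : p11a > p11p) (hb0 : 0 ≤ b) (hb1 : b ≤ 1) :
    b * p11p + (1 - b) * p01p < b * p11a + (1 - b) * p01a := by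
  rcases eq_or_lt_of_le hb0 with h | h
  · simp [← h]; linarith
  · nlinarith [mul_pos h (sub_pos.mpr h8),
      mul_nonneg (by linarith : (0:ℝ) ≤ 1 - b) (by linarith : (0:ℝ) ≤ p01a - p01p)]

lemma V_eq_Aact (β m p01p p11p p01a p11a : ℝ)
    (h1 : 0 ≤ p01p) (h2 : p01p < p11p) (h3 : p11p ≤ 1)
    (h4 : 0 ≤ p01a) (h5 : p01a < p11a) (h6 : p11a ≤ 1)
    (h7 : p01a > p01p) (h8 : p11a > p11p)
    (hβ : 0 < β) (hm : m ≤ 0) :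
    ∀ (T : ℕ) (b : ℝ), 0 ≤ b → b ≤ 1 →
      V β m p01p p11p p01a p11a T b = Aact β p01a p11a T b := by
  intro T
  induction T with
  | zero => intro b _ _; simp [V, Aact]
  | succ T ih =>
    intro b hb0 hb1
    have harg0 : 0 ≤ b * p11p + (1 - b) * p01p := by
      have := mul_nonneg hb0 (by linarith : (0:ℝ) ≤ p11p)
      have := mul_nonneg (by linarith : (0:ℝ) ≤ 1 - b) h1
      linarith
    have harg1 : b * p11p + (1 - b) * p01p ≤ 1 := by
      nlinarith [mul_nonneg hb0 (by linarith : (0:ℝ) ≤ 1 - p11p),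
        mul_nonneg (by linarith : (0:ℝ) ≤ 1 - b) (by linarith : (0:ℝ) ≤ 1 - p01p)]
    simp only [V, Aact]
    rw [ih _ harg0 harg1, ih p11a (by linarith) h6, ih p01a h4 (by linarith)]
    have hA : b * Aact β p01a p11a T p11a + (1 - b) * Aact β p01a p11a T p01a
        = Aact β p01a p11a T (b * p11a + (1 - b) * p01a) :=
      (Aact_affine β p01a p11a T b p11a p01a).symm
    have hlt : Aact β p01a p11a T (b * p11p + (1 - b) * p01p)
        < Aact β p01a p11a T (b * p11a + (1 - b) * p01a) := by
      have h := Aact_mono β p01a p11a hβ h5 T _ _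
        (le_of_lt (arg_lt p01p p11p p01a p11a b h7 h8 hb0 hb1))
      have := arg_lt p01p p11p p01a p11a b h7 h8 hb0 hb1
      linarith
    apply max_eq_right
    rw [hA]
    nlinarith [mul_lt_mul_of_pos_left hlt hβ]

lemma main_aux (β m p01p p11p p01a p11a b : ℝ)
    (h1 : 0 ≤ p01p) (h2 : p01p < p11p) (h3 : p11p ≤ 1)
    (h4 : 0 ≤ p01a) (h5 : p01a < p11a) (h6 : p11a ≤ 1)
    (h7 : p01a > p01p) (h8 : p11a > p11p)
    (hβ : 0 < β) (hm : m ≤ 0) (hb0 : 0 ≤ b) (hb1 : b ≤ 1) (S : ℕ) :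
    b + m + β * V β m p01p p11p p01a p11a S (b * p11p + (1 - b) * p01p) <
    b + β * (b * V β m p01p p11p p01a p11a S p11a
             + (1 - b) * V β m p01p p11p p01a p11a S p01a) := by
  have harg0 : 0 ≤ b * p11p + (1 - b) * p01p := by
    have := mul_nonneg hb0 (by linarith : (0:ℝ) ≤ p11p)
    have := mul_nonneg (by linarith : (0:ℝ) ≤ 1 - b) h1
    linarith
  have harg1 : b * p11p + (1 - b) * p01p ≤ 1 := by
    nlinarith [mul_nonneg hb0 (by linarith : (0:ℝ) ≤ 1 - p11p),
      mul_nonneg (by linarith : (0:ℝ) ≤ 1 - b) (by linarith : (0:ℝ) ≤ 1 - p01p)]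
  rw [V_eq_Aact β m p01p p11p p01a p11a h1 h2 h3 h4 h5 h6 h7 h8 hβ hm S _ harg0 harg1,
    V_eq_Aact β m p01p p11p p01a p11a h1 h2 h3 h4 h5 h6 h7 h8 hβ hm S p11a (by linarith) h6,
    V_eq_Aact β m p01p p11p p01a p11a h1 h2 h3 h4 h5 h6 h7 h8 hβ hm S p01a h4 (by linarith)]
  have hA : b * Aact β p01a p11a S p11a + (1 - b) * Aact β p01a p11a S p01a
      = Aact β p01a p11a S (b * p11a + (1 - b) * p01a) :=
    (Aact_affine β p01a p11a S b p11a p01a).symm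
  have hlt : Aact β p01a p11a S (b * p11p + (1 - b) * p01p)
      < Aact β p01a p11a S (b * p11a + (1 - b) * p01a) := by
    have h := Aact_mono β p01a p11a hβ h5 S _ _
      (le_of_lt (arg_lt p01p p11p p01a p11a b h7 h8 hb0 hb1))
    have := arg_lt p01p p11p p01a p11a b h7 h8 hb0 hb1
    linarith
  rw [hA]
  nlinarith [mul_lt_mul_of_pos_left hlt hβ]

theorem active_exceeds_passive_at_zero_subsidy
    (p01p p11p p01a p11a β b : ℝ) (T : ℕ)
    (h1 : 0 ≤ p01p) (h2 : p01p < p11p) (h3 : p11p ≤ 1)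
    (h4 : 0 ≤ p01a) (h5 : p01a < p11a) (h6 : p11a ≤ 1)
    (h7 : p01a > p01p) (h8 : p11a > p11p)
    (hβ : 0 < β) (hb0 : 0 ≤ b) (hb1 : b ≤ 1) (hT : 1 ≤ T) :
    Va β 0 p01p p11p p01a p11a T b > Vp β 0 p01p p11p p01a p11a T b ∧
    (∀ m : ℝ, Vp β m p01p p11p p01a p11a T b ≥ Va β m p01p p11p p01a p11a T b → m > 0) := by
  constructor
  · have h := main_aux β 0 p01p p11p p01a p11a b h1 h2 h3 h4 h5 h6 h7 h8 hβ le_rfl hb0 hb1 (T - 1)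
    simp only [Vp, Va]
    linarith
  · intro m hge
    by_contra hpos
    push_neg at hpos
    have h := main_aux β m p01p p11p p01a p11a b h1 h2 h3 h4 h5 h6 h7 h8 hβ hpos hb0 hb1 (T - 1)
    simp only [Vp, Va] at hge
    linarith
end

section
/- If β ≥ 0, then for every m and every horizon T ∈ ℕ, the map b ↦ V m T b is convex on ℝ. -/
theorem value_function_convex_in_belief
    (p01p p11p p01a p11a β : ℝ) (hβ : 0 ≤ β) :
    ∀ (m : ℝ) (T : ℕ),
      ConvexOn ℝ Set.univ (fun b : ℝ => V β m p01p p11p p01a p11a T b) := by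
  intro m T
  induction T with
  | zero =>
    simp only [V]
    exact (convexOn_id (convex_univ : Convex ℝ (Set.univ : Set ℝ)))
  | succ T ih =>
    have h1 : ConvexOn ℝ Set.univ
        (fun b : ℝ => b + m + β * V β m p01p p11p p01a p11a T (b * p11p + (1 - b) * p01p)) := by
      have haff : ConvexOn ℝ Set.univ
          (fun b : ℝ => V β m p01p p11p p01a p11a T (b * p11p + (1 - b) * p01p)) := by
        have h := ih.comp_affineMap
          ((p11p - p01p) • AffineMap.id ℝ ℝ + AffineMap.const ℝ ℝ p01p)
        simp only [Set.preimage_univ] at h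
        refine h.congr fun b _ => ?_
        simp only [AffineMap.coe_add, AffineMap.coe_smul, AffineMap.coe_id,
          AffineMap.coe_const, Function.comp, Pi.add_apply, Pi.smul_apply,
          id_eq, Function.const_apply, smul_eq_mul]
        ring_nf
      have h := ((convexOn_id (convex_univ : Convex ℝ (Set.univ : Set ℝ))).add
        (convexOn_const m convex_univ)).add (haff.smul hβ)
      refine h.congr fun b _ => ?_
      simp [smul_eq_mul]
    have h2 : ConvexOn ℝ Set.univ
        (fun b : ℝ => b + β * (b * V β m p01p p11p p01a p11a T p11a
                    + (1 - b) * V β m p01p p11p p01a p11a T p01a)) := by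
      refine ⟨convex_univ, ?_⟩
      intro x _ y _ a b ha hb hab
      have hb' : b = 1 - a := by linarith
      subst hb'
      simp only [smul_eq_mul]
      apply le_of_eq
      ring
    simp only [V]
    exact h1.sup h2
end

section
/- Suppose β ≥ 0 and P01p, P11p, P01a, P11a ∈ [0,1]. Then for every horizon T ∈ ℕ and every b ∈ [0,1], the map m ↦ V m T b is monotone nondecreasing and convex on ℝ. -/
theorem value_function_monotone_convex_in_subsidy
    (p01p p11p p01a p11a β : ℝ) (hβ : 0 ≤ β)
    (h1 : 0 ≤ p01p) (h1' : p01p ≤ 1) (h2 : 0 ≤ p11p) (h2' : p11p ≤ 1)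
    (h3 : 0 ≤ p01a) (h3' : p01a ≤ 1) (h4 : 0 ≤ p11a) (h4' : p11a ≤ 1) :
    ∀ (T : ℕ) (b : ℝ), 0 ≤ b → b ≤ 1 →
      Monotone (fun m : ℝ => V β m p01p p11p p01a p11a T b) ∧
      ConvexOn ℝ Set.univ (fun m : ℝ => V β m p01p p11p p01a p11a T b) := by
  intro T
  induction T with
  | zero =>
    intro b _ _
    constructor
    · exact monotone_const
    · exact convexOn_const b convex_univ
  | succ T ih =>
    intro b hb hb1
    have hbp : 0 ≤ b * p11p + (1 - b) * p01p := add_nonneg (mul_nonneg hb h2) (mul_nonneg (by linarith) h1)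
    have hbp1 : b * p11p + (1 - b) * p01p ≤ 1 := by nlinarith
    obtain ⟨m1, c1⟩ := ih (b * p11p + (1 - b) * p01p) hbp hbp1
    obtain ⟨m2, c2⟩ := ih p11a h4 h4'
    obtain ⟨m3, c3⟩ := ih p01a h3 h3'
    have hmp : Monotone (fun m : ℝ =>
        b + m + β * V β m p01p p11p p01a p11a T (b * p11p + (1 - b) * p01p)) := by
      intro x y hxy
      have := m1 hxy
      have := mul_le_mul_of_nonneg_left this hβ
      simpa using by linarith
    have hma : Monotone (fun m : ℝ =>
        b + β * (b * V β m p01p p11p p01a p11a T p11a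
                 + (1 - b) * V β m p01p p11p p01a p11a T p01a)) := by
      intro x y hxy
      have h2a := m2 hxy
      have h3a := m3 hxy
      have hb' : 0 ≤ 1 - b := by linarith
      have := add_le_add (mul_le_mul_of_nonneg_left h2a hb)
        (mul_le_mul_of_nonneg_left h3a hb')
      have := mul_le_mul_of_nonneg_left this hβ
      simpa using by linarith
    have hcp : ConvexOn ℝ Set.univ (fun m : ℝ =>
        b + m + β * V β m p01p p11p p01a p11a T (b * p11p + (1 - b) * p01p)) := by
      have haff : ConvexOn ℝ Set.univ (fun m : ℝ => b + m) :=
        (convexOn_const b convex_univ).add (convexOn_id convex_univ)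
      exact haff.add (c1.smul hβ)
    have hca : ConvexOn ℝ Set.univ (fun m : ℝ =>
        b + β * (b * V β m p01p p11p p01a p11a T p11a
                 + (1 - b) * V β m p01p p11p p01a p11a T p01a)) := by
      have hb' : 0 ≤ 1 - b := by linarith
      have : ConvexOn ℝ Set.univ (fun m : ℝ =>
          b * V β m p01p p11p p01a p11a T p11a
          + (1 - b) * V β m p01p p11p p01a p11a T p01a) :=
        (c2.smul hb).add (c3.smul hb')
      exact (convexOn_const b convex_univ).add (this.smul hβ)
    constructor
    · exact hmp.max hma
    · exact hcp.sup hca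
end

section
/- Suppose β ≥ 0 and P01p, P11p, P01a, P11a ∈ [0,1]. Then for every horizon T ∈ ℕ, every b ∈ [0,1], and all reals m ≤ m′: 0 ≤ V m′ T b − V m T b ≤ (m′ − m)·(∑_{t=0}^{T−1} β^t). -/
theorem value_function_lipschitz_in_subsidy
    (p01p p11p p01a p11a β : ℝ) (hβ : 0 ≤ β)
    (h1 : 0 ≤ p01p) (h1' : p01p ≤ 1) (h2 : 0 ≤ p11p) (h2' : p11p ≤ 1)
    (h3 : 0 ≤ p01a) (h3' : p01a ≤ 1) (h4 : 0 ≤ p11a) (h4' : p11a ≤ 1) :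
    ∀ (T : ℕ) (b : ℝ), 0 ≤ b → b ≤ 1 → ∀ m m' : ℝ, m ≤ m' →
      0 ≤ V β m' p01p p11p p01a p11a T b - V β m p01p p11p p01a p11a T b ∧
      V β m' p01p p11p p01a p11a T b - V β m p01p p11p p01a p11a T b
        ≤ (m' - m) * (∑ t ∈ Finset.range T, β ^ t) := by
  intro T
  induction T with
  | zero =>
    intro b _ _ m m' _
    simp [V]
  | succ T ih =>
    intro b hb0 hb1 m m' hm
    have hb'0 : 0 ≤ b * p11p + (1 - b) * p01p :=
      add_nonneg (mul_nonneg hb0 h2) (mul_nonneg (by linarith) h1)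
    have hb'1 : b * p11p + (1 - b) * p01p ≤ 1 := by nlinarith
    have hS : (0:ℝ) ≤ ∑ t ∈ Finset.range T, β ^ t :=
      Finset.sum_nonneg fun t _ => pow_nonneg hβ t
    obtain ⟨hp0, hp1⟩ := ih _ hb'0 hb'1 m m' hm
    obtain ⟨ha0, ha1⟩ := ih p11a h4 h4' m m' hm
    obtain ⟨hc0, hc1⟩ := ih p01a h3 h3' m m' hm
    have hmm : 0 ≤ m' - m := by linarith
    have hsum : (∑ t ∈ Finset.range (T+1), β ^ t) = 1 + β * ∑ t ∈ Finset.range T, β ^ t := by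
      rw [geom_sum_succ]; ring
    set S := ∑ t ∈ Finset.range T, β ^ t with hSdef
    set vp := V β m p01p p11p p01a p11a T (b * p11p + (1 - b) * p01p)
    set vp' := V β m' p01p p11p p01a p11a T (b * p11p + (1 - b) * p01p)
    set va := V β m p01p p11p p01a p11a T p11a
    set va' := V β m' p01p p11p p01a p11a T p11a
    set vc := V β m p01p p11p p01a p11a T p01a
    set vc' := V β m' p01p p11p p01a p11a T p01a
    have hβp : β * (vp' - vp) ≤ β * ((m' - m) * S) :=
      mul_le_mul_of_nonneg_left hp1 hβ
    have hβp0 : 0 ≤ β * (vp' - vp) := mul_nonneg hβ hp0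
    have hba : b * (va' - va) ≤ b * ((m' - m) * S) :=
      mul_le_mul_of_nonneg_left ha1 hb0
    have hba0 : 0 ≤ b * (va' - va) := mul_nonneg hb0 ha0
    have hbc : (1 - b) * (vc' - vc) ≤ (1 - b) * ((m' - m) * S) :=
      mul_le_mul_of_nonneg_left hc1 (by linarith)
    have hbc0 : 0 ≤ (1 - b) * (vc' - vc) := mul_nonneg (by linarith) hc0
    have hact : β * (b * va' + (1 - b) * vc') - β * (b * va + (1 - b) * vc)
        ≤ β * ((m' - m) * S) := by
      have : b * va' + (1 - b) * vc' - (b * va + (1 - b) * vc) ≤ (m' - m) * S := by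
        nlinarith
      nlinarith [mul_le_mul_of_nonneg_left this hβ]
    have hact0 : 0 ≤ β * (b * va' + (1 - b) * vc') - β * (b * va + (1 - b) * vc) := by
      nlinarith
    have eVm : V β m p01p p11p p01a p11a (T+1) b
        = max (b + m + β * vp) (b + β * (b * va + (1 - b) * vc)) := rfl
    have eVm' : V β m' p01p p11p p01a p11a (T+1) b
        = max (b + m' + β * vp') (b + β * (b * va' + (1 - b) * vc')) := rfl
    rw [eVm, eVm', hsum]
    constructor
    · have : max (b + m + β * vp) (b + β * (b * va + (1 - b) * vc))
          ≤ max (b + m' + β * vp') (b + β * (b * va' + (1 - b) * vc')) :=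
        max_le_max (by linarith) (by linarith)
      linarith
    · have hexp : (m' - m) * (1 + β * S) = (m' - m) + β * ((m' - m) * S) := by ring
      have hA : b + m' + β * vp' ≤ max (b + m + β * vp) (b + β * (b * va + (1 - b) * vc))
          + (m' - m) * (1 + β * S) := by
        have := le_max_left (b + m + β * vp) (b + β * (b * va + (1 - b) * vc))
        linarith
      have hB : b + β * (b * va' + (1 - b) * vc')
          ≤ max (b + m + β * vp) (b + β * (b * va + (1 - b) * vc))
          + (m' - m) * (1 + β * S) := by
        have := le_max_right (b + m + β * vp) (b + β * (b * va + (1 - b) * vc))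
        linarith
      have := max_le hA hB
      linarith
end
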